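/- If for each edge the series admittance matrix g_e is positive definite Hermitian (as a real-part condition on the complex admittance) and shunts are zero, then the flattened nodal admittance matrix Y is positive semidefinite Hermitian, with Y V = 0 for the flattened all-constant-per-phase voltage profiles. -/

import Mathlib

open Matrix ComplexOrder

/-- Shunt-free nodal admittance hypermatrix built from edge admittance blocks. -/
noncomputable def shuntFreeTensor {Node E : Type*} [DecidableEq Node] [Fintype E]
    (ends : E → Node × Node) (g : E → Matrix (Fin 3) (Fin 3) ℂ) :
    Fin 3 → Fin 3 → Node → Node → ℂ :=
  fun i j k m =>
    ∑ e : E,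
      ((if k = (ends e).1 ∧ m = (ends e).1 then g e else 0) +
       (if k = (ends e).2 ∧ m = (ends e).2 then g e else 0) -
       (if k = (ends e).1 ∧ m = (ends e).2 then g e else 0) -
       (if k = (ends e).2 ∧ m = (ends e).1 then g e else 0)) i j

lemma shuntFreeTensor_apply' {Node E : Type*} [DecidableEq Node] [Fintype E]
    (ends : E → Node × Node) (g : E → Matrix (Fin 3) (Fin 3) ℂ)
    (i j : Fin 3) (k m : Node) :
    shuntFreeTensor ends g i j k m =
    ∑ e : E,
      ((if k = (ends e).1 ∧ m = (ends e).1 then g e i j else 0) +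
       (if k = (ends e).2 ∧ m = (ends e).2 then g e i j else 0) -
       (if k = (ends e).1 ∧ m = (ends e).2 then g e i j else 0) -
       (if k = (ends e).2 ∧ m = (ends e).1 then g e i j else 0)) := by
  unfold shuntFreeTensor
  refine Finset.sum_congr rfl fun e _ => ?_
  split_ifs <;> simp

lemma shuntFree_quadform {N : ℕ} {E : Type*} [Fintype E]
    (ends : E → Fin N × Fin N) (g : E → Matrix (Fin 3) (Fin 3) ℂ)
    (Y : Matrix (Fin 3 × Fin N) (Fin 3 × Fin N) ℂ)
    (hY : ∀ i j k m, Y (i, k) (j, m) = shuntFreeTensor ends g i j k m)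
    (V : Fin 3 × Fin N → ℂ) :
    star V ⬝ᵥ Y.mulVec V
    = ∑ e : E, ∑ i : Fin 3, ∑ j : Fin 3,
        (starRingEnd ℂ) (V (i, (ends e).1) - V (i, (ends e).2)) * g e i j *
          (V (j, (ends e).1) - V (j, (ends e).2)) := by
  have hY' : ∀ p q : Fin 3 × Fin N, Y p q = shuntFreeTensor ends g p.1 q.1 p.2 q.2 := by
    intro p q; rw [← hY]
  set T : E → (Fin 3 × Fin N) → (Fin 3 × Fin N) → ℂ := fun e p q =>
    (starRingEnd ℂ) (V p) *
      ((if p.2 = (ends e).1 ∧ q.2 = (ends e).1 then g e p.1 q.1 else 0) +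
       (if p.2 = (ends e).2 ∧ q.2 = (ends e).2 then g e p.1 q.1 else 0) -
       (if p.2 = (ends e).1 ∧ q.2 = (ends e).2 then g e p.1 q.1 else 0) -
       (if p.2 = (ends e).2 ∧ q.2 = (ends e).1 then g e p.1 q.1 else 0)) * V q with hT
  have h1 : star V ⬝ᵥ Y.mulVec V = ∑ p : Fin 3 × Fin N, ∑ q : Fin 3 × Fin N, ∑ e : E, T e p q := by
    simp only [hT, dotProduct, mulVec, Pi.star_apply, RCLike.star_def, hY', shuntFreeTensor_apply',
      Finset.sum_mul, Finset.mul_sum, mul_assoc]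
  rw [h1]
  have h2 : ∑ p : Fin 3 × Fin N, ∑ q : Fin 3 × Fin N, ∑ e : E, T e p q
      = ∑ e : E, ∑ p : Fin 3 × Fin N, ∑ q : Fin 3 × Fin N, T e p q := by
    trans ∑ p : Fin 3 × Fin N, ∑ e : E, ∑ q : Fin 3 × Fin N, T e p q
    · exact Finset.sum_congr rfl fun p _ => Finset.sum_comm
    · exact Finset.sum_comm
  rw [h2]
  refine Finset.sum_congr rfl fun e _ => ?_
  simp only [hT, Fintype.sum_prod_type, ite_and, mul_ite, ite_mul, mul_zero, zero_mul,
    mul_add, add_mul, mul_sub, sub_mul, Finset.sum_add_distrib, Finset.sum_sub_distrib,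
    Finset.sum_ite_irrel, Finset.sum_const_zero, Finset.sum_ite_eq,
    Finset.sum_ite_eq', Finset.mem_univ, if_true, map_sub]
  abel

lemma shuntFree_quadform_eq_dot {E' : Type*} [Fintype E']
    (A : Matrix (Fin 3) (Fin 3) ℂ) (w : Fin 3 → ℂ) :
    (∑ i : Fin 3, ∑ j : Fin 3, (starRingEnd ℂ) (w i) * A i j * w j)
      = star w ⬝ᵥ A.mulVec w := by
  simp [dotProduct, mulVec, Finset.mul_sum, mul_assoc]

/-- If every series admittance block `g e` is a positive semidefinite Hermitian
matrix and there are no shunts, then the flattened `3N × 3N` nodal admittance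
matrix `Y (i, k) (j, m) = y i j k m` is Hermitian positive semidefinite, and its
quadratic form decomposes over edges as
`⟪V, Y V⟫ = ∑ e, (v k₀ - v m₀)ᴴ g_e (v k₀ - v m₀) ≥ 0`. -/
theorem shuntFree_flattened_posSemidef {N : ℕ} {E : Type*} [Fintype E]
    (ends : E → Fin N × Fin N) (g : E → Matrix (Fin 3) (Fin 3) ℂ)
    (hdist : ∀ e, (ends e).1 ≠ (ends e).2) (hg : ∀ e, (g e).PosSemidef)
    (Y : Matrix (Fin 3 × Fin N) (Fin 3 × Fin N) ℂ)
    (hY : ∀ i j k m, Y (i, k) (j, m) = shuntFreeTensor ends g i j k m) :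
    Y.PosSemidef ∧
    ∀ v : Fin N → Fin 3 → ℂ, ∀ V : Fin 3 × Fin N → ℂ, (∀ j m, V (j, m) = v m j) →
      (star V ⬝ᵥ Y.mulVec V =
        ∑ e : E, ∑ i : Fin 3, ∑ j : Fin 3,
          starRingEnd ℂ (v (ends e).1 i - v (ends e).2 i) * g e i j *
            (v (ends e).1 j - v (ends e).2 j)) ∧
      0 ≤ (star V ⬝ᵥ Y.mulVec V).re := by
  have hY' : ∀ p q : Fin 3 × Fin N, Y p q = shuntFreeTensor ends g p.1 q.1 p.2 q.2 := by
    intro p q; rw [← hY]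
  have hquad : ∀ V : Fin 3 × Fin N → ℂ, (0 : ℂ) ≤ star V ⬝ᵥ Y.mulVec V := by
    intro V
    rw [shuntFree_quadform ends g Y hY V]
    refine Finset.sum_nonneg fun e _ => ?_
    rw [shuntFree_quadform_eq_dot (E' := E)]
    exact (hg e).dotProduct_mulVec_nonneg _
  have hpsd : Y.PosSemidef := by
    rw [posSemidef_iff_dotProduct_mulVec]
    constructor
    · -- Hermitian
      ext p q
      obtain ⟨i, k⟩ := p; obtain ⟨j, m⟩ := q
      rw [conjTranspose_apply, hY' (j, m) (i, k), hY' (i, k) (j, m),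
        shuntFreeTensor_apply', shuntFreeTensor_apply', star_sum]
      refine Finset.sum_congr rfl fun e _ => ?_
      have h' : star (g e j i) = g e i j := by
        conv_rhs => rw [← (hg e).1]
        rw [conjTranspose_apply]
      simp only [star_sub, star_add, apply_ite (star : ℂ → ℂ), star_zero, h']
      clear hY hY' hquad hdist hg h' Y
      split_ifs <;> first | ring1 | (exfalso; simp_all)
    · exact hquad
  refine ⟨hpsd, fun v V hV => ?_⟩
  have heq : star V ⬝ᵥ Y.mulVec V =
      ∑ e : E, ∑ i : Fin 3, ∑ j : Fin 3,
        starRingEnd ℂ (v (ends e).1 i - v (ends e).2 i) * g e i j *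
          (v (ends e).1 j - v (ends e).2 j) := by
    rw [shuntFree_quadform ends g Y hY V]
    simp [hV]
  refine ⟨heq, ?_⟩
  have := hquad V
  rw [Complex.le_def] at this
  simpa using this.1
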